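/- Let h : [0,1]² → {0,1} be symmetric measurable and let λ(x) = ∫₀¹ h(x,y) dy. Let X₀, X₁, X₂, ... be i.i.d. uniform on [0,1] and let R = |{i ≥ 1 : h(X_i, X_j) = 1 for all 1 ≤ j < i}|. Then E[R] = Σ_{i≥1} E[λ(X₀)^{i-1}] ≥ 1/(1 - ∫∫ h(x,y) dx dy), where the sum and bound may be +∞. -/

import Mathlib

open MeasureTheory Set ENNReal

lemma ecb_jensen_pow {α : Type*} [MeasurableSpace α] {μ : Measure α}
    [IsProbabilityMeasure μ] {f : α → ℝ≥0∞} (hf : AEMeasurable f μ) (n : ℕ) :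
    (∫⁻ a, f a ∂μ) ^ n ≤ ∫⁻ a, f a ^ n ∂μ := by
  rcases Nat.eq_zero_or_pos n with rfl | hn
  · simp
  have hn' : (0:ℝ) < n := by exact_mod_cast hn
  have key := ENNReal.lintegral_mul_norm_pow_le (μ := μ)
      (f := fun a => f a ^ n) (g := fun _ => (1:ℝ≥0∞))
      (hf.pow_const n) aemeasurable_const (p := 1/(n:ℝ)) (q := 1 - 1/(n:ℝ))
      (by positivity)
      (by
        have : 1/(n:ℝ) ≤ 1 := by
          rw [div_le_one hn']; exact_mod_cast hn
        linarith)
      (by ring)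
  have h1 : ∀ a : α, (f a ^ n) ^ (1/(n:ℝ)) = f a := by
    intro a
    rw [← ENNReal.rpow_natCast (f a) n, ← ENNReal.rpow_mul,
      mul_one_div, div_self hn'.ne', ENNReal.rpow_one]
  simp only [h1, lintegral_const, measure_univ, mul_one, ENNReal.one_rpow] at key
  have key2 := ENNReal.rpow_le_rpow key (le_of_lt hn')
  rw [← ENNReal.rpow_mul, one_div_mul_cancel hn'.ne', ENNReal.rpow_one,
    ENNReal.rpow_natCast] at key2
  exact key2

lemma ecb_map_tuple_eq_pi {Ω : Type*} [MeasurableSpace Ω] {ℙ : Measure Ω}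
    [IsProbabilityMeasure ℙ]
    {X : ℕ → Ω → ℝ} (hXmeas : ∀ i, Measurable (X i))
    (hindep : ProbabilityTheory.iIndepFun X ℙ)
    {μ : Measure ℝ} [IsFiniteMeasure μ] (hdist : ∀ i, ℙ.map (X i) = μ)
    {n : ℕ} (e : Fin n → ℕ) (he : Function.Injective e) :
    ℙ.map (fun ω k => X (e k) ω) = Measure.pi (fun _ => μ) := by
  classical
  have hXB : ∀ (i : ℕ) (B : Set ℝ), MeasurableSet B → ℙ (X i ⁻¹' B) = μ B := by
    intro i B hB
    rw [← hdist i, Measure.map_apply (hXmeas i) hB]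
  symm
  apply Measure.pi_eq
  intro s hs
  rw [Measure.map_apply (measurable_pi_lambda _ fun k => hXmeas (e k))
    (MeasurableSet.univ_pi hs)]
  set sets : ℕ → Set ℝ := fun i => if hk : ∃ k, e k = i then s hk.choose else univ with hsets
  have hsets_e : ∀ k, sets (e k) = s k := by
    intro k
    have hk : ∃ k', e k' = e k := ⟨k, rfl⟩
    have := hk.choose_spec
    simp only [hsets, dif_pos hk]
    rw [he this]
  have hsets_meas : ∀ i, MeasurableSet (sets i) := by
    intro i
    by_cases hk : ∃ k, e k = i
    · simp only [hsets, dif_pos hk]; exact hs _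
    · simp only [hsets, dif_neg hk]; exact MeasurableSet.univ
  have hpre : (fun ω k => X (e k) ω) ⁻¹' (Set.pi univ s)
      = ⋂ i ∈ Finset.image e Finset.univ, X i ⁻¹' sets i := by
    ext ω
    simp only [mem_preimage, Set.mem_pi, mem_univ, forall_true_left, Set.mem_iInter,
      Finset.mem_image, Finset.mem_univ, true_and]
    constructor
    · rintro hω i ⟨k, rfl⟩
      rw [hsets_e]; exact hω k
    · intro hω k
      have := hω (e k) ⟨k, rfl⟩
      rwa [hsets_e] at this
  rw [hpre, hindep.measure_inter_preimage_eq_mul _ (fun i _ => hsets_meas i),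
    Finset.prod_image (fun a _ b _ hab => he hab)]
  refine Finset.prod_congr rfl fun k _ => ?_
  rw [hXB _ _ (hsets_meas _), hsets_e]

lemma ecb_tail_prob {Ω : Type*} [MeasurableSpace Ω] {ℙ : Measure Ω}
    [IsProbabilityMeasure ℙ]
    {X : ℕ → Ω → ℝ} (hXmeas : ∀ i, Measurable (X i))
    (hindep : ProbabilityTheory.iIndepFun X ℙ)
    {μ : Measure ℝ} [IsProbabilityMeasure μ] (hdist : ∀ i, ℙ.map (X i) = μ)
    {h : ℝ → ℝ → ℝ} (hmeas : Measurable (Function.uncurry h)) (n : ℕ) :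
    ℙ {ω | ∀ k : Fin n, h (X (n+1) ω) (X ((k:ℕ)+1) ω) = 1}
      = ∫⁻ x, μ {y | h x y = 1} ^ n ∂μ := by
  classical
  set Sset : Set (ℝ × ℝ) := Function.uncurry h ⁻¹' {1} with hSset
  have hS : MeasurableSet Sset := hmeas (measurableSet_singleton 1)
  set T : Ω → Fin (n+1) → ℝ := fun ω k => X ((k:ℕ)+1) ω with hTdef
  have hTmeas : Measurable T := measurable_pi_lambda _ fun k => hXmeas _
  have hT : ℙ.map T = Measure.pi (fun _ : Fin (n+1) => μ) :=
    ecb_map_tuple_eq_pi hXmeas hindep hdist (fun k : Fin (n+1) => (k:ℕ)+1)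
      (fun a b hab => Fin.val_injective (by simpa using hab))
  set B : Set (Fin (n+1) → ℝ) :=
    {v | ∀ k : Fin n, h (v (Fin.last n)) (v k.castSucc) = 1} with hBdef
  have hB : MeasurableSet B := by
    have : B = ⋂ k : Fin n, (fun v : Fin (n+1) → ℝ => (v (Fin.last n), v k.castSucc)) ⁻¹' Sset := by
      ext v; simp [hBdef, hSset, Function.uncurry]
    rw [this]
    exact MeasurableSet.iInter fun k =>
      ((measurable_pi_apply _).prodMk (measurable_pi_apply _)) hS
  have hev : {ω | ∀ k : Fin n, h (X (n+1) ω) (X ((k:ℕ)+1) ω) = 1} = T ⁻¹' B := by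
    ext ω
    simp [hBdef, hTdef, Fin.val_last, Fin.coe_castSucc]
  rw [hev, ← Measure.map_apply hTmeas hB, hT]
  -- now compute the pi measure of B
  set ε := MeasurableEquiv.piFinSuccAbove (fun _ : Fin (n+1) => ℝ) (Fin.last n) with hε
  set C : Set (ℝ × (Fin n → ℝ)) := {p | ∀ k : Fin n, h p.1 (p.2 k) = 1} with hCdef
  have hC : MeasurableSet C := by
    have : C = ⋂ k : Fin n, (fun p : ℝ × (Fin n → ℝ) => (p.1, p.2 k)) ⁻¹' Sset := by
      ext p; simp [hCdef, hSset, Function.uncurry]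
    rw [this]
    exact MeasurableSet.iInter fun k =>
      (measurable_fst.prodMk ((measurable_pi_apply _).comp measurable_snd)) hS
  have hBC : B = ε ⁻¹' C := by
    ext v
    simp [hBdef, hCdef, hε, MeasurableEquiv.piFinSuccAbove, Fin.removeNth, Fin.init,
      Fin.succAbove_last]
  rw [hBC,
    (measurePreserving_piFinSuccAbove (fun _ : Fin (n+1) => μ) (Fin.last n)).measure_preimage_equiv,
    Measure.prod_apply hC]
  have hxC : ∀ x : ℝ, Prod.mk x ⁻¹' C = Set.pi univ (fun _ : Fin n => {y | h x y = 1}) := by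
    intro x; ext w; simp [hCdef, Set.mem_pi]
  simp only [hxC, Measure.pi_pi, Finset.prod_const, Finset.card_univ, Fintype.card_fin]

theorem expected_count_bound (Ω : Type*) [MeasurableSpace Ω] (ℙ : Measure Ω)
    [IsProbabilityMeasure ℙ]
    (X : ℕ → Ω → ℝ) (hXmeas : ∀ i, Measurable (X i))
    (hindep : ProbabilityTheory.iIndepFun X ℙ)
    (hdist : ∀ i, ℙ.map (X i) = volume.restrict (Set.Icc (0 : ℝ) 1))
    (h : ℝ → ℝ → ℝ) (hmeas : Measurable (Function.uncurry h))
    (hsymm : ∀ x y, h x y = h y x) (hvals : ∀ x y, h x y = 0 ∨ h x y = 1)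
    (lam : ℝ → ℝ) (hlam : ∀ x, lam x = ∫ y in Set.Icc (0 : ℝ) 1, h x y) :
    ((∫⁻ ω, (({i : ℕ | 1 ≤ i ∧ ∀ j, 1 ≤ j → j < i → h (X i ω) (X j ω) = 1}.encard : ℕ∞) :
        ENNReal) ∂ℙ)
      = ∑' i : ℕ, ∫⁻ x in Set.Icc (0 : ℝ) 1, ENNReal.ofReal (lam x ^ i)) ∧
    (1 / ENNReal.ofReal
        (1 - ∫ q : ℝ × ℝ, h q.1 q.2
          ∂((volume.restrict (Set.Icc (0 : ℝ) 1)).prod (volume.restrict (Set.Icc (0 : ℝ) 1)))))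
      ≤ ∫⁻ ω, (({i : ℕ | 1 ≤ i ∧ ∀ j, 1 ≤ j → j < i → h (X i ω) (X j ω) = 1}.encard : ℕ∞) :
        ENNReal) ∂ℙ := by
  classical
  set μ : Measure ℝ := volume.restrict (Set.Icc (0:ℝ) 1) with hμ
  haveI : IsProbabilityMeasure μ := ⟨by
    rw [hμ, Measure.restrict_apply_univ, Real.volume_Icc]
    norm_num⟩
  set Sset : Set (ℝ × ℝ) := Function.uncurry h ⁻¹' {1} with hSset
  have hS : MeasurableSet Sset := hmeas (measurableSet_singleton 1)
  set f : ℝ → ℝ≥0∞ := fun x => μ {y | h x y = 1} with hfdef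
  have hxS : ∀ x : ℝ, {y | h x y = 1} = Prod.mk x ⁻¹' Sset := by
    intro x; ext y; simp [hSset, Function.uncurry]
  have hfmeas : Measurable f := by
    have := measurable_measure_prodMk_left (ν := μ) hS
    simpa [hfdef, hxS] using this
  have hTx : ∀ x : ℝ, MeasurableSet {y | h x y = 1} := by
    intro x; rw [hxS]; exact measurable_prodMk_left hS
  -- lam and f
  have hf_ne_top : ∀ x, f x ≠ ⊤ := fun x => measure_ne_top μ _
  have hlam2 : ∀ x, lam x = (f x).toReal := by
    intro x
    rw [hlam x]
    have hind : ∀ y, h x y = ({y | h x y = 1}).indicator (fun _ => (1:ℝ)) y := by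
      intro y
      by_cases hy : h x y = 1
      · simp [Set.indicator_apply, hy]
      · rcases hvals x y with h0 | h1
        · simp [Set.indicator_apply, hy, h0]
        · exact absurd h1 hy
    calc ∫ y in Set.Icc (0:ℝ) 1, h x y
        = ∫ y, ({y | h x y = 1}).indicator (fun _ => (1:ℝ)) y ∂μ := by
          rw [hμ]; exact integral_congr_ae (Filter.Eventually.of_forall hind)
      _ = (f x).toReal := integral_indicator_one (hTx x)
  have hofReal : ∀ (x : ℝ) (n : ℕ), ENNReal.ofReal (lam x ^ n) = f x ^ n := by
    intro x n
    rw [hlam2, ← ENNReal.toReal_pow, ENNReal.ofReal_toReal (ENNReal.pow_ne_top (hf_ne_top x))]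
  have hRHS : ∀ i : ℕ, (∫⁻ x in Set.Icc (0:ℝ) 1, ENNReal.ofReal (lam x ^ i))
      = ∫⁻ x, f x ^ i ∂μ := by
    intro i
    rw [hμ]
    exact lintegral_congr fun x => hofReal x i
  -- the events
  set A : ℕ → Set Ω :=
    fun i => {ω | 1 ≤ i ∧ ∀ j, 1 ≤ j → j < i → h (X i ω) (X j ω) = 1} with hAdef
  have hA : ∀ i, MeasurableSet (A i) := by
    intro i
    rcases Nat.eq_zero_or_pos i with rfl | hi
    · convert MeasurableSet.empty
      ext ω; simp [hAdef]
    · have : A i = ⋂ (j : ℕ) (_ : 1 ≤ j) (_ : j < i),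
          (fun ω => (X i ω, X j ω)) ⁻¹' Sset := by
        ext ω
        simp only [hAdef, Set.mem_setOf_eq, Set.mem_iInter, Set.mem_preimage, hSset,
          Function.uncurry, Set.mem_singleton_iff]
        exact ⟨fun hω j hj1 hj2 => hω.2 j hj1 hj2, fun hω => ⟨hi, hω⟩⟩
      rw [this]
      exact MeasurableSet.iInter fun j => MeasurableSet.iInter fun _ =>
        MeasurableSet.iInter fun _ => ((hXmeas i).prodMk (hXmeas j)) hS
  have hAsucc : ∀ n : ℕ,
      A (n+1) = {ω | ∀ k : Fin n, h (X (n+1) ω) (X ((k:ℕ)+1) ω) = 1} := by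
    intro n
    ext ω
    simp only [hAdef, Set.mem_setOf_eq]
    constructor
    · rintro ⟨-, hω⟩ k
      exact hω ((k:ℕ)+1) (Nat.succ_le_succ (Nat.zero_le _)) (Nat.succ_lt_succ k.isLt)
    · intro hω
      refine ⟨Nat.succ_le_succ (Nat.zero_le _), fun j hj1 hj2 => ?_⟩
      have hj : j - 1 + 1 = j := by omega
      rw [← hj]
      exact hω ⟨j - 1, by omega⟩
  have hprob : ∀ n : ℕ, ℙ (A (n+1)) = ∫⁻ x, f x ^ n ∂μ := by
    intro n
    rw [hAsucc n]
    exact ecb_tail_prob hXmeas hindep hdist hmeas n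
  -- Step 1: expectation as sum of probabilities
  have hcard : ∀ ω : Ω,
      ((({i : ℕ | 1 ≤ i ∧ ∀ j, 1 ≤ j → j < i → h (X i ω) (X j ω) = 1}.encard : ℕ∞) : ℝ≥0∞))
        = ∑' i : ℕ, (A i).indicator (fun _ => (1:ℝ≥0∞)) ω := by
    intro ω
    rw [← ENNReal.tsum_set_one]
    refine (tsum_subtype _ (fun _ => (1:ℝ≥0∞))).trans (tsum_congr fun i => ?_)
    by_cases hP : 1 ≤ i ∧ ∀ j, 1 ≤ j → j < i → h (X i ω) (X j ω) = 1
    · rw [Set.indicator_of_mem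
          (show i ∈ {i : ℕ | 1 ≤ i ∧ ∀ j, 1 ≤ j → j < i → h (X i ω) (X j ω) = 1} from hP),
        Set.indicator_of_mem (show ω ∈ A i from hP)]
    · rw [Set.indicator_of_notMem
          (show i ∉ {i : ℕ | 1 ≤ i ∧ ∀ j, 1 ≤ j → j < i → h (X i ω) (X j ω) = 1} from hP),
        Set.indicator_of_notMem (show ω ∉ A i from hP)]
  have key1 : (∫⁻ ω, (({i : ℕ | 1 ≤ i ∧ ∀ j, 1 ≤ j → j < i → h (X i ω) (X j ω) = 1}.encard :
        ℕ∞) : ENNReal) ∂ℙ) = ∑' n : ℕ, ∫⁻ x, f x ^ n ∂μ := by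
    calc (∫⁻ ω, (({i : ℕ | 1 ≤ i ∧ ∀ j, 1 ≤ j → j < i → h (X i ω) (X j ω) = 1}.encard :
          ℕ∞) : ENNReal) ∂ℙ)
        = ∫⁻ ω, ∑' i : ℕ, (A i).indicator (fun _ => (1:ℝ≥0∞)) ω ∂ℙ :=
          lintegral_congr hcard
      _ = ∑' i : ℕ, ∫⁻ ω, (A i).indicator (fun _ => (1:ℝ≥0∞)) ω ∂ℙ :=
          lintegral_tsum fun i => ((measurable_const.indicator (hA i)).aemeasurable)
      _ = ∑' i : ℕ, ℙ (A i) := tsum_congr fun i => lintegral_indicator_one (hA i)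
      _ = ℙ (A 0) + ∑' n : ℕ, ℙ (A (n+1)) := tsum_eq_zero_add' ENNReal.summable
      _ = ∑' n : ℕ, ∫⁻ x, f x ^ n ∂μ := by
          have hA0 : A 0 = ∅ := by ext ω; simp [hAdef]
          rw [hA0, measure_empty, zero_add]
          exact tsum_congr hprob
  constructor
  · rw [key1]
    exact (tsum_congr fun i => (hRHS i).symm)
  · -- second part
    rw [key1]
    set a : ℝ≥0∞ := (μ.prod μ) Sset with hadef
    have hI : (∫ q : ℝ × ℝ, h q.1 q.2 ∂(μ.prod μ)) = a.toReal := by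
      have hind : ∀ q : ℝ × ℝ, h q.1 q.2 = Sset.indicator (fun _ => (1:ℝ)) q := by
        intro q
        by_cases hq : h q.1 q.2 = 1
        · have : q ∈ Sset := by simp [hSset, Function.uncurry, hq]
          simp [Set.indicator_of_mem this, hq]
        · have : q ∉ Sset := by simp [hSset, Function.uncurry, hq]
          rcases hvals q.1 q.2 with h0 | h1
          · simp [Set.indicator_of_notMem this, h0]
          · exact absurd h1 hq
      calc (∫ q : ℝ × ℝ, h q.1 q.2 ∂(μ.prod μ))
          = ∫ q, Sset.indicator (fun _ => (1:ℝ)) q ∂(μ.prod μ) :=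
            integral_congr_ae (Filter.Eventually.of_forall hind)
        _ = a.toReal := integral_indicator_one hS
    have hofr : ENNReal.ofReal (1 - ∫ q : ℝ × ℝ, h q.1 q.2 ∂(μ.prod μ)) = 1 - a := by
      rw [hI, ENNReal.ofReal_sub _ ENNReal.toReal_nonneg, ENNReal.ofReal_one,
        ENNReal.ofReal_toReal (measure_ne_top _ _)]
    have ha_int : a = ∫⁻ x, f x ∂μ := by
      rw [hadef, Measure.prod_apply hS]
      refine lintegral_congr fun x => ?_
      simp only [hfdef, hxS]
    rw [hμ] at hofr ⊢
    rw [hofr, one_div, ← ENNReal.tsum_geometric]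
    refine ENNReal.tsum_le_tsum fun n => ?_
    calc a ^ n = (∫⁻ x, f x ∂μ) ^ n := by rw [ha_int]
      _ ≤ ∫⁻ x, f x ^ n ∂μ := ecb_jensen_pow hfmeas.aemeasurable n
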